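/- Let q be a prime, let n ≥ 1, and work in the group of units of ℤ/qℤ. Let g be a unit modulo q, let d₁, …, dₙ, x₁, …, xₙ, s be integers, let e = g^{d₁+⋯+dₙ}, let p₁, …, p_k be distinct primes each at most b with b^n < q, let δ ∈ {1,…,n}, and let r : {1,…,n} → {1,…,k} give each voter's chosen prime index, with each prime p_j nonzero modulo q. Then the tally product P = (p_{r(δ)} · e^{x_δ}) · ∏_{i≠δ} ((p_{r(i)} · g^{s}) · e^{x_i}) · g^{-(n-1)s} · ∏_{i=1}^{n} (∏_{k'=1}^{n} g^{x_{k'}})^{-d_i}, computed in ℤ/qℤ, equals the residue modulo q of the integer ∏_{j=1}^{k} p_j^{a_j}, where a_j = |{ i : r(i) = j }|; consequently, by the bound b^n < q, P uniquely determines the vote counts a₁, …, a_k. (End-to-end correctness of BVOT: any party can compute the exact number of votes for each prime from the published values.) -/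

import Mathlib

lemma my_prod_zpow {G : Type*} [CommGroupWithZero G]
    {ι : Type*} (s : Finset ι) (g : G) (hg : g ≠ 0) (f : ι → ℤ) :
    ∏ i ∈ s, g ^ f i = g ^ (∑ i ∈ s, f i) := by
  classical
  induction s using Finset.cons_induction with
  | empty => simp
  | cons a s ha ih => rw [Finset.prod_cons, Finset.sum_cons, zpow_add₀ hg, ih]

theorem bvot_end_to_end_correct
    (q : ℕ) (hq : q.Prime) (n : ℕ) (hn : 1 ≤ n) :
    haveI : Fact q.Prime := ⟨hq⟩
    ∀ (g : ZMod q), IsUnit g →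
    ∀ (d x : Fin n → ℤ) (s : ℤ) (e : ZMod q), e = g ^ (∑ i, d i) →
    ∀ (b k : ℕ) (p : Fin k → ℕ),
      (∀ j, (p j).Prime) → Function.Injective p → (∀ j, p j ≤ b) → b ^ n < q →
    ∀ (δ : Fin n) (r : Fin n → Fin k), (∀ j, ((p j : ZMod q) ≠ 0)) →
    ((p (r δ) : ZMod q) * e ^ (x δ)) *
        (∏ i ∈ Finset.univ \ {δ}, ((p (r i) : ZMod q) * g ^ s) * e ^ (x i)) *
        g ^ (-(((n : ℤ) - 1) * s)) *
        (∏ i, (∏ k', g ^ (x k')) ^ (-(d i))) =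
      ((∏ j, p j ^ (Finset.univ.filter fun i => r i = j).card : ℕ) : ZMod q) ∧
    ∀ a' : Fin k → ℕ, ∑ j, a' j ≤ n →
      ((∏ j, p j ^ a' j : ℕ) : ZMod q) =
        ((∏ j, p j ^ (Finset.univ.filter fun i => r i = j).card : ℕ) : ZMod q) →
      ∀ j, a' j = (Finset.univ.filter fun i => r i = j).card := by
  haveI : Fact q.Prime := ⟨hq⟩
  intro g hg d x s e he b k p hp hpinj hpb hbq δ r hpz
  have hg0 : g ≠ 0 := hg.ne_zero
  classical
  set D : ℤ := ∑ i, d i with hD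
  set T : ℤ := ∑ i, x i with hT
  set a : Fin k → ℕ := fun j => (Finset.univ.filter fun i => r i = j).card with ha
  have hsum_a : ∑ j, a j = n := by
    have := Finset.card_eq_sum_card_fiberwise
      (f := r) (s := (Finset.univ : Finset (Fin n))) (t := Finset.univ)
      (fun x _ => Finset.mem_univ _)
    simpa [ha] using this.symm
  constructor
  · -- main tally equality
    subst he
    have hδ : δ ∈ (Finset.univ : Finset (Fin n)) := Finset.mem_univ δ
    have hcard : ((Finset.univ : Finset (Fin n)) \ {δ}).card = n - 1 := by
      simp [Finset.sdiff_singleton_eq_erase, Finset.card_erase_of_mem hδ]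
    have h1 : ∏ i ∈ Finset.univ \ {δ}, ((p (r i) : ZMod q) * g ^ s) * (g ^ D) ^ (x i)
        = (∏ i ∈ Finset.univ \ {δ}, (p (r i) : ZMod q)) *
          g ^ (∑ i ∈ Finset.univ \ {δ}, (s + D * x i)) := by
      calc ∏ i ∈ Finset.univ \ {δ}, ((p (r i) : ZMod q) * g ^ s) * (g ^ D) ^ (x i)
          = ∏ i ∈ Finset.univ \ {δ}, ((p (r i) : ZMod q) * g ^ (s + D * x i)) := by
            refine Finset.prod_congr rfl fun i _ => ?_
            rw [zpow_add₀ hg0, ← zpow_mul, mul_assoc]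
        _ = (∏ i ∈ Finset.univ \ {δ}, (p (r i) : ZMod q)) *
            ∏ i ∈ Finset.univ \ {δ}, g ^ (s + D * x i) := Finset.prod_mul_distrib
        _ = _ := by rw [my_prod_zpow _ g hg0]
    have h2 : (∏ i : Fin n, ((∏ k' : Fin n, g ^ (x k')) ^ (-(d i)) : ZMod q))
        = g ^ (-(T * D)) := by
      have hT' : (∏ k' : Fin n, g ^ (x k') : ZMod q) = g ^ T :=
        my_prod_zpow _ g hg0 _
      rw [hT']
      calc (∏ i : Fin n, ((g ^ T) ^ (-(d i)) : ZMod q))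
          = ∏ i : Fin n, g ^ (T * (-(d i))) := by
            refine Finset.prod_congr rfl fun i _ => ?_
            rw [zpow_mul]
        _ = g ^ (∑ i : Fin n, T * (-(d i))) := my_prod_zpow _ g hg0 _
        _ = g ^ (-(T * D)) := by
            congr 1
            rw [← Finset.mul_sum]
            have : ∑ i : Fin n, -(d i) = -D := by
              rw [hD]; exact Finset.sum_neg_distrib (f := d)
            rw [this, mul_neg]
    have hxsum : ∑ i ∈ Finset.univ \ {δ}, x i = T - x δ := by
      rw [hT]
      have := Finset.sum_sdiff_eq_sub (f := x) (Finset.singleton_subset_iff.2 hδ)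
      simp
    have hexp : ∑ i ∈ Finset.univ \ {δ}, (s + D * x i)
        = ((n : ℤ) - 1) * s + D * (T - x δ) := by
      rw [Finset.sum_add_distrib, Finset.sum_const, hcard, ← Finset.mul_sum, hxsum]
      have hc : ((n - 1 : ℕ) : ℤ) = (n : ℤ) - 1 := by omega
      rw [nsmul_eq_mul, hc]
    rw [h1, h2, hexp]
    have hprimes : (∏ i : Fin n, (p (r i) : ZMod q))
        = ((∏ j, p j ^ a j : ℕ) : ZMod q) := by
      have hfib : (∏ j, ∏ i ∈ Finset.univ.filter fun i => r i = j, (p (r i) : ZMod q))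
          = ∏ i : Fin n, (p (r i) : ZMod q) :=
        Finset.prod_fiberwise_of_maps_to (fun i _ => Finset.mem_univ _) _
      rw [← hfib]
      push_cast
      refine Finset.prod_congr rfl fun j _ => ?_
      calc ∏ i ∈ Finset.univ.filter fun i => r i = j, (p (r i) : ZMod q)
          = ∏ i ∈ Finset.univ.filter fun i => r i = j, (p j : ZMod q) :=
            Finset.prod_congr rfl fun i hi => by rw [(Finset.mem_filter.1 hi).2]
        _ = (p j : ZMod q) ^ a j := by rw [Finset.prod_const]
    have hall : (∏ i : Fin n, (p (r i) : ZMod q))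
        = (p (r δ) : ZMod q) * ∏ i ∈ Finset.univ \ {δ}, (p (r i) : ZMod q) := by
      rw [Finset.sdiff_singleton_eq_erase]
      exact (Finset.mul_prod_erase _ _ hδ).symm
    calc (p (r δ) : ZMod q) * (g ^ D) ^ (x δ) *
          ((∏ i ∈ Finset.univ \ {δ}, (p (r i) : ZMod q)) *
            g ^ (((n : ℤ) - 1) * s + D * (T - x δ))) *
          g ^ (-(((n : ℤ) - 1) * s)) * g ^ (-(T * D))
        = ((p (r δ) : ZMod q) * (∏ i ∈ Finset.univ \ {δ}, (p (r i) : ZMod q))) *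
          (g ^ (D * x δ) * g ^ (((n : ℤ) - 1) * s + D * (T - x δ)) *
            g ^ (-(((n : ℤ) - 1) * s)) * g ^ (-(T * D))) := by
          rw [zpow_mul]; ring
      _ = ((∏ j, p j ^ a j : ℕ) : ZMod q) := by
          rw [← hall, hprimes, ← zpow_add₀ hg0, ← zpow_add₀ hg0, ← zpow_add₀ hg0]
          have h0 : D * x δ + (((n : ℤ) - 1) * s + D * (T - x δ)) +
              -(((n : ℤ) - 1) * s) + -(T * D) = 0 := by ring
          rw [h0, zpow_zero, mul_one]
  · -- uniqueness
    intro a' ha'n hcast j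
    have hb2 : 2 ≤ b := le_trans (hp (r δ)).two_le (hpb (r δ))
    have hbound : ∀ (c : Fin k → ℕ), ∑ j, c j ≤ n → (∏ j, p j ^ c j) < q := by
      intro c hc
      calc ∏ j, p j ^ c j ≤ ∏ j, b ^ c j :=
            Finset.prod_le_prod (fun _ _ => Nat.zero_le _)
              (fun j _ => Nat.pow_le_pow_left (hpb j) _)
        _ = b ^ (∑ j, c j) := Finset.prod_pow_eq_pow_sum _ _ _
        _ ≤ b ^ n := Nat.pow_le_pow_right (by omega) hc
        _ < q := hbq
    have h1 : (∏ j, p j ^ a' j) < q := hbound a' ha'n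
    have h2 : (∏ j, p j ^ a j) < q := hbound a (le_of_eq hsum_a)
    have heq : (∏ j, p j ^ a' j) = (∏ j, p j ^ a j) := by
      have hmod := (ZMod.natCast_eq_natCast_iff _ _ _).1 hcast
      rwa [Nat.ModEq, Nat.mod_eq_of_lt h1, Nat.mod_eq_of_lt h2] at hmod
    have hfac : ∀ (c : Fin k → ℕ), (∏ j', p j' ^ c j').factorization (p j) = c j := by
      intro c
      rw [Nat.factorization_prod (fun j' _ => pow_ne_zero _ (hp j').pos.ne')]
      rw [Finsupp.finset_sum_apply]
      rw [Finset.sum_eq_single j]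
      · rw [(hp j).factorization_pow, Finsupp.single_eq_same]
      · intro j' _ hj'
        rw [(hp j').factorization_pow,
          Finsupp.single_eq_of_ne' (fun h => hj' (hpinj h))]
      · intro h; exact absurd (Finset.mem_univ j) h
    have hcj := hfac a'
    rw [heq, hfac a] at hcj
    exact hcj.symm
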